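/- Let K = k((u))((t)) be a two-dimensional local field over a field k. For ω ∈ Ω̃²_{K/k}, write ω = Σ_i u^i du ∧ ω_i(t) with ω_i(t) ∈ Ω̃¹_{k((t))/k}, and define res_u(ω) = ω_{-1}(t). Then res_u does not depend on the choice of the local parameter u ∈ k[[u,t]] (with fixed embedding k((t)) ↪ K), i.e., if u' ∈ k[[u,t]] is another element whose image in k((u)) has valuation 1, then res_{u'}(ω) = res_u(ω) for all ω. -/

import Mathlib

noncomputable section

abbrev LS (k : Type) [Field k] := LaurentSeries k
abbrev LS2 (k : Type) [Field k] := LaurentSeries (LaurentSeries k)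

/-- Formal derivative of a Laurent series. -/
def lsDeriv {R : Type} [AddCommGroup R] (f : LaurentSeries R) : LaurentSeries R where
  coeff n := (n + 1) • f.coeff (n + 1)
  isPWO_support' := by
    have h : (Function.support fun n : ℤ => (n + 1) • f.coeff (n + 1)) ⊆
        (fun n : ℤ => n - 1) '' (Function.support f.coeff) := by
      intro n hn
      refine ⟨n + 1, ?_, by ring⟩
      intro h0
      simp [Function.mem_support, h0] at hn
    exact (f.isPWO_support'.image_of_monotone
      (fun a b hab => by dsimp; omega : Monotone fun n : ℤ => n - 1)).mono h

lemma lsDeriv_zero {R : Type} [AddCommGroup R] : lsDeriv (0 : LaurentSeries R) = 0 := by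
  ext n
  simp [lsDeriv]

variable {k : Type} [Field k]

/-- ∂/∂u on k((u))((t)) (outer variable t, inner variable u): coefficientwise derivative. -/
def uDeriv (f : LS2 k) : LS2 k where
  coeff j := lsDeriv (f.coeff j)
  isPWO_support' := by
    refine f.isPWO_support'.mono ?_
    intro j hj
    simp only [Function.mem_support] at hj ⊢
    intro h0
    exact hj (by rw [h0, lsDeriv_zero])

/-- ∂/∂t on k((u))((t)): derivative in the outer variable. -/
def tDeriv (f : LS2 k) : LS2 k := lsDeriv f

/-- res_u : extracts the coefficient of u^(-1), giving a Laurent series in t. -/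
def resU (f : LS2 k) : LS k where
  coeff j := (f.coeff j).coeff (-1)
  isPWO_support' := by
    refine f.isPWO_support'.mono ?_
    intro j hj
    simp only [Function.mem_support] at hj ⊢
    intro h0
    exact hj (by rw [h0]; simp)

/-- One-dimensional residue: coefficient of τ^(-1). -/
def res1 (f : LS k) : k := f.coeff (-1)

/-- Two-dimensional residue: coefficient of u^(-1) t^(-1). -/
def res2 (f : LS2 k) : k := (f.coeff (-1)).coeff (-1)

/-- The embedding of k((t)) into k((u))((t)) (constants in u). -/
def ofT (g : LS k) : LS2 k where
  coeff j := HahnSeries.C (g.coeff j)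
  isPWO_support' := by
    refine g.isPWO_support'.mono ?_
    intro j hj
    simp only [Function.mem_support] at hj ⊢
    intro h0
    exact hj (by rw [h0, map_zero])

/-- The element u of k((u))((t)). -/
def uElem : LS2 k := HahnSeries.single 0 (HahnSeries.single 1 1)

/-- The element t of k((u))((t)). -/
def tElem : LS2 k := HahnSeries.single 1 1

/-- The coefficient of du ∧ dt in (dφ/φ) ∧ (dψ/ψ). -/
def wedge (φ ψ : LS2 k) : LS2 k :=
  (φ * ψ)⁻¹ * (uDeriv φ * tDeriv ψ - tDeriv φ * uDeriv ψ)

/-- Membership in the group of principal units E¹ = 1 + u·k[[u]] + t·k((u))[[t]]. -/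
def memE1 (φ : LS2 k) : Prop :=
  (∀ j < 0, φ.coeff j = 0) ∧ (∀ i < 0, (φ.coeff 0).coeff i = 0) ∧ (φ.coeff 0).coeff 0 = 1

/-- Membership in m = u·k[[u]] + t·k((u))[[t]]. -/
def memM (x : LS2 k) : Prop :=
  (∀ j < 0, x.coeff j = 0) ∧ (∀ i ≤ 0, (x.coeff 0).coeff i = 0)

/-- Partial sums of the logarithm series of φ = 1 + x. -/
def partialLog (φ : LS2 k) (n : ℕ) : LS2 k :=
  ∑ m ∈ Finset.Icc 1 n, ((-1 : LS2 k) ^ (m + 1) * (m : LS2 k)⁻¹) * (φ - 1) ^ m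

/-- `L` is the logarithm of `φ`: every coefficient of the partial sums of the log series
is eventually equal to the corresponding coefficient of `L` (convergence in the topology of
the two-dimensional local field). -/
def IsLogOf (φ L : LS2 k) : Prop :=
  ∀ a b : ℤ, ∃ N : ℕ, ∀ n ≥ N, ((partialLog φ n).coeff b).coeff a = (L.coeff b).coeff a

/-- Partial sums of the exponential series. -/
def partialExp (x : LS2 k) (n : ℕ) : LS2 k :=
  ∑ m ∈ Finset.range (n + 1), ((Nat.factorial m : LS2 k))⁻¹ * x ^ m

/-- `E` is the exponential of `x`, coefficientwise. -/
def IsExpOf (x E : LS2 k) : Prop :=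
  ∀ a b : ℤ, ∃ N : ℕ, ∀ n ≥ N, ((partialExp x n).coeff b).coeff a = (E.coeff b).coeff a

/-- Partial sums of the exponential series in the one-dimensional field k((t)). -/
def partialExp1 (x : LS k) (n : ℕ) : LS k :=
  ∑ m ∈ Finset.range (n + 1), ((Nat.factorial m : LS k))⁻¹ * x ^ m

/-- `E` is the exponential of `x` in k((t)), coefficientwise. -/
def IsExpOf1 (x E : LS k) : Prop :=
  ∀ a : ℤ, ∃ N : ℕ, ∀ n ≥ N, (partialExp1 x n).coeff a = E.coeff a

/-- The tame symbol of the local field k((t)). -/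
def tame1 (φ ψ : LS k) : k :=
  (-1 : k) ^ (φ.order * ψ.order) * (φ ^ ψ.order * ψ ^ (-φ.order)).coeff 0

section Lemmas
open HahnSeries
set_option maxHeartbeats 1000000
set_option synthInstance.maxHeartbeats 1000000

instance : IsRightCancelAdd (LS2 k) := ⟨fun a b c h => by
  ext g n
  have h2 := congrArg (fun x : LS2 k => (x.coeff g).coeff n) h
  simp only [HahnSeries.coeff_add] at h2
  have h3 := congrArg (fun x => x - (a.coeff g).coeff n) h2
  simpa using h3⟩

lemma coeff_mul_fin {R : Type} [Ring R] (x y : HahnSeries ℤ R) (n : ℤ) :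
    (x*y).coeff n = ∑ᶠ a : ℤ, x.coeff a * y.coeff (n - a) := by
  rw [HahnSeries.coeff_mul]
  set s := Finset.antidiagonal x.isPWO_support y.isPWO_support n with hs
  have hsupp : (Function.support fun a : ℤ => x.coeff a * y.coeff (n - a)) ⊆
      ↑(s.image Prod.fst) := by
    intro a ha
    simp only [Function.mem_support] at ha
    have hx : x.coeff a ≠ 0 := fun h => ha (by simp [h])
    have hy : y.coeff (n - a) ≠ 0 := fun h => ha (by simp [h])
    simp only [Finset.coe_image, Set.mem_image, Finset.mem_coe]
    exact ⟨(a, n - a), by simp [hs, Finset.mem_antidiagonal, hx, hy,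
      HahnSeries.mem_support], rfl⟩
  rw [finsum_eq_finset_sum_of_support_subset _ hsupp,
    Finset.sum_image (fun p hp q hq h => ?_)]
  · refine Finset.sum_congr rfl fun ij hij => ?_
    rw [Finset.mem_antidiagonal] at hij
    obtain ⟨-, -, h3⟩ := hij
    have : n - ij.1 = ij.2 := by omega
    rw [this]
  · rw [Finset.mem_coe, Finset.mem_antidiagonal] at hp hq
    obtain ⟨-, -, hp3⟩ := hp
    obtain ⟨-, -, hq3⟩ := hq
    have : p.2 = q.2 := by omega
    exact Prod.ext h this

lemma mulsupp_fin {R : Type} [Ring R] (x y : HahnSeries ℤ R) (n : ℤ) :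
    (Function.support fun a : ℤ => x.coeff a * y.coeff (n - a)).Finite := by
  apply Set.Finite.subset
    ((Finset.antidiagonal x.isPWO_support y.isPWO_support n).image Prod.fst).finite_toSet
  intro a ha
  simp only [Function.mem_support] at ha
  have hx : x.coeff a ≠ 0 := fun h => ha (by simp [h])
  have hy : y.coeff (n - a) ≠ 0 := fun h => ha (by simp [h])
  simp only [Finset.coe_image, Set.mem_image, Finset.mem_coe]
  exact ⟨(a, n - a), by simp [Finset.mem_antidiagonal, hx, hy, HahnSeries.mem_support], rfl⟩

lemma lsDeriv_coeff {R : Type} [AddCommGroup R] (f : LaurentSeries R) (n : ℤ) :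
    (lsDeriv f).coeff n = (n + 1) • f.coeff (n + 1) := rfl

lemma lsDeriv_add {R : Type} [AddCommGroup R] (f g : LaurentSeries R) :
    lsDeriv (f + g) = lsDeriv f + lsDeriv g := by
  ext n
  simp [lsDeriv_coeff, smul_add]

lemma lsDeriv_mul {R : Type} [CommRing R] (f g : LaurentSeries R) :
    lsDeriv (f * g) = lsDeriv f * g + f * lsDeriv g := by
  ext n
  rw [HahnSeries.coeff_add, lsDeriv_coeff, coeff_mul_fin, coeff_mul_fin, coeff_mul_fin,
    smul_finsum' (n+1) (mulsupp_fin f g (n+1))]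
  have key : ∀ a : ℤ, (n+1) • (f.coeff a * g.coeff (n + 1 - a)) =
      (a • f.coeff a) * g.coeff (n + 1 - a) + f.coeff a * ((n + 1 - a) • g.coeff (n + 1 - a)) := by
    intro a
    rw [smul_mul_assoc, mul_smul_comm, ← add_smul]
    ring_nf
  rw [finsum_congr key, finsum_add_distrib ?hf ?hg]
  case hf =>
    apply (mulsupp_fin f g (n+1)).subset
    intro a ha
    simp only [Function.mem_support] at ha ⊢
    intro h
    exact ha (by rw [smul_mul_assoc, h, smul_zero])
  case hg =>
    apply (mulsupp_fin f g (n+1)).subset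
    intro a ha
    simp only [Function.mem_support] at ha ⊢
    intro h
    exact ha (by rw [mul_smul_comm, h, smul_zero])
  congr 1
  · rw [← finsum_comp (fun a : ℤ => a + 1) (Equiv.addRight (1:ℤ)).bijective
      (g := fun a : ℤ => (a • f.coeff a) * g.coeff (n + 1 - a))]
    apply finsum_congr
    intro a
    rw [lsDeriv_coeff]
    congr 2
    omega
  · apply finsum_congr
    intro a
    rw [lsDeriv_coeff]
    have h1 : n + 1 - a = n - a + 1 := by omega
    rw [h1]

lemma lsDeriv_one {R : Type} [Ring R] : lsDeriv (1 : LaurentSeries R) = 0 := by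
  ext n
  rw [lsDeriv_coeff]
  by_cases h : n + 1 = 0
  · rw [h]; simp
  · simp [HahnSeries.coeff_one, h]

/-- lsDeriv as an AddMonoidHom. -/
def lsDerivHom (R : Type) [AddCommGroup R] : LaurentSeries R →+ LaurentSeries R :=
  AddMonoidHom.mk' lsDeriv lsDeriv_add

lemma uDeriv_coeff (f : LS2 k) (j : ℤ) : (uDeriv f).coeff j = lsDeriv (f.coeff j) := rfl

lemma uDeriv_add (f g : LS2 k) : uDeriv (f + g) = uDeriv f + uDeriv g := by
  ext j
  simp [uDeriv_coeff, HahnSeries.coeff_add, lsDeriv_add]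

lemma uDeriv_one : uDeriv (1 : LS2 k) = 0 := by
  ext j
  rw [uDeriv_coeff]
  by_cases h : j = 0
  · simp [h, HahnSeries.coeff_one, lsDeriv_one]
  · simp [HahnSeries.coeff_one, h, lsDeriv_zero]

lemma uDeriv_mul (f g : LS2 k) : uDeriv (f * g) = uDeriv f * g + f * uDeriv g := by
  ext j
  rw [uDeriv_coeff, HahnSeries.coeff_add, coeff_mul_fin, coeff_mul_fin, coeff_mul_fin,
    show (lsDeriv : LaurentSeries k → LaurentSeries k) = ⇑(lsDerivHom k) from rfl,
    AddMonoidHom.map_finsum _ (mulsupp_fin f g j)]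
  have key : ∀ a : ℤ, lsDerivHom k (f.coeff a * g.coeff (j - a)) =
      (uDeriv f).coeff a * g.coeff (j - a) + f.coeff a * (uDeriv g).coeff (j - a) := by
    intro a
    show lsDeriv _ = _
    rw [lsDeriv_mul, uDeriv_coeff, uDeriv_coeff]
  rw [finsum_congr key, finsum_add_distrib ?hf2 ?hg2]
  case hf2 => exact mulsupp_fin (uDeriv f) g j
  case hg2 => exact mulsupp_fin f (uDeriv g) j

/-- coefficient extraction as an AddMonoidHom. -/
def coeffHom {R : Type} [AddCommGroup R] (a : ℤ) : LaurentSeries R →+ R :=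
  AddMonoidHom.mk' (fun x => x.coeff a) (fun _ _ => rfl)

lemma resU_coeff (f : LS2 k) (b : ℤ) : (resU f).coeff b = (f.coeff b).coeff (-1) := rfl

lemma resU_uDeriv (f : LS2 k) : resU (uDeriv f) = 0 := by
  ext b
  rw [resU_coeff, uDeriv_coeff, lsDeriv_coeff]
  norm_num

lemma resU_mul_ofT (f : LS2 k) (h : LS k) : resU (f * ofT h) = resU f * h := by
  ext b
  rw [resU_coeff, coeff_mul_fin, coeff_mul_fin]
  rw [show (∑ᶠ (a : ℤ), f.coeff a * (ofT h).coeff (b - a)).coeff (-1)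
      = ∑ᶠ (a : ℤ), (f.coeff a * (ofT h).coeff (b - a)).coeff (-1) from
    AddMonoidHom.map_finsum (coeffHom (-1)) (mulsupp_fin f (ofT h) b)]
  apply finsum_congr
  intro a
  rw [show (ofT h).coeff (b - a) = HahnSeries.C (h.coeff (b - a)) from rfl,
    HahnSeries.C_apply, HahnSeries.coeff_mul_single_zero, resU_coeff]

lemma zsmul_coeff {R : Type} [AddCommGroup R] (m : ℤ) (x : LaurentSeries R) (a : ℤ) :
    (m • x).coeff a = m • x.coeff a := map_zsmul (coeffHom a) m x

lemma nsmul_coeff {R : Type} [AddCommGroup R] (m : ℕ) (x : LaurentSeries R) (a : ℤ) :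
    (m • x).coeff a = m • x.coeff a := map_nsmul (coeffHom a) m x

lemma finsum_zero' {M : Type} [AddCommMonoid M] {f : ℤ → M} (h : ∀ a, f a = 0) :
    ∑ᶠ a : ℤ, f a = 0 := by
  rw [finsum_congr h]
  exact finsum_zero

lemma mul_coeff_zero_of_lt {R : Type} [Ring R] (x y : HahnSeries ℤ R) {m n j : ℤ}
    (hx : ∀ i < m, x.coeff i = 0) (hy : ∀ i < n, y.coeff i = 0) (hj : j < m + n) :
    (x * y).coeff j = 0 := by
  rw [coeff_mul_fin]
  apply finsum_zero'
  intro a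
  by_cases ha : a < m
  · rw [hx a ha, zero_mul]
  · rw [hy (j - a) (by omega), mul_zero]

lemma pow_coeff_zero_of_lt {R : Type} [Ring R] (x : HahnSeries ℤ R)
    (hx : ∀ i < (1:ℤ), x.coeff i = 0) (N : ℕ) : ∀ j < (N : ℤ), (x ^ N).coeff j = 0 := by
  induction N with
  | zero =>
    intro j hj
    rw [pow_zero, HahnSeries.coeff_one, if_neg (by omega)]
  | succ N ih =>
    intro j hj
    rw [pow_succ]
    exact mul_coeff_zero_of_lt _ _ ih hx (by push_cast; omega)

lemma inv_coeff_field {F : Type} [Field F] (v : LaurentSeries F) (d : ℤ)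
    (h0 : ∀ j < d, v.coeff j = 0) (hd : v.coeff d ≠ 0) :
    (∀ j < -d, v⁻¹.coeff j = 0) ∧ (v⁻¹).coeff (-d) = (v.coeff d)⁻¹ := by
  have hv : v ≠ 0 := fun h => hd (by simp [h])
  have hinv : v⁻¹ ≠ 0 := inv_ne_zero hv
  set m := (v⁻¹).order with hm
  have hmc : (v⁻¹).coeff m ≠ 0 := HahnSeries.coeff_order_eq_zero.not.mpr hinv
  have hlt : ∀ j < m, (v⁻¹).coeff j = 0 := fun j hj => HahnSeries.coeff_eq_zero_of_lt_order hj
  have hmul : v⁻¹ * v = 1 := inv_mul_cancel₀ hv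
  have hcoeff : (v⁻¹ * v).coeff (m + d) = (v⁻¹).coeff m * v.coeff d := by
    rw [coeff_mul_fin]
    rw [finsum_eq_single _ m fun a ha => ?_]
    · rw [show m + d - m = d by omega]
    · by_cases h1 : a < m
      · rw [hlt a h1, zero_mul]
      · rw [h0 (m + d - a) (by omega), mul_zero]
  have hmd : m + d = 0 := by
    by_contra hne
    rw [hmul, HahnSeries.coeff_one, if_neg hne] at hcoeff
    exact mul_ne_zero hmc hd hcoeff.symm
  have hm' : m = -d := by omega
  refine ⟨fun j hj => hlt j (by omega), ?_⟩
  have h2 : (v⁻¹ * v).coeff 0 = (v⁻¹).coeff (-d) * v.coeff d := by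
    rw [show (0:ℤ) = m + d by omega, hcoeff, hm']
  rw [hmul, HahnSeries.coeff_one, if_pos rfl] at h2
  exact eq_inv_of_mul_eq_one_left h2.symm

lemma natCast_mul_coeff {F : Type} [Field F] (m : ℕ) (X : LaurentSeries F) (b : ℤ) :
    ((m : LaurentSeries F) * X).coeff b = (m : F) * X.coeff b := by
  rw [show ((m : LaurentSeries F)) = HahnSeries.C ((m : F)) from
      (map_natCast (HahnSeries.C : F →+* LaurentSeries F) m).symm,
    HahnSeries.C_apply, HahnSeries.coeff_single_zero_mul]

lemma intCast_mul_coeff {F : Type} [Field F] (m : ℤ) (X : LaurentSeries F) (b : ℤ) :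
    ((m : LaurentSeries F) * X).coeff b = (m : F) * X.coeff b := by
  rw [show ((m : LaurentSeries F)) = HahnSeries.C ((m : F)) from
      (map_intCast (HahnSeries.C : F →+* LaurentSeries F) m).symm,
    HahnSeries.C_apply, HahnSeries.coeff_single_zero_mul]

lemma natCast_coeff_zero {F : Type} [Field F] (m : ℕ) :
    ((m : LaurentSeries F)).coeff 0 = (m : F) := by
  rw [show ((m : LaurentSeries F)) = HahnSeries.C ((m : F)) from
      (map_natCast (HahnSeries.C : F →+* LaurentSeries F) m).symm,
    HahnSeries.C_apply, HahnSeries.coeff_single_same]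

lemma natCast_ne_zero_ls2 [CharZero k] (m : ℕ) (hm : m ≠ 0) : ((m : LS2 k)) ≠ 0 := by
  intro h
  have h2 : ((m : LS2 k)).coeff 0 = 0 := by rw [h]; rfl
  rw [natCast_coeff_zero] at h2
  have h3 : ((m : LS k)).coeff 0 = 0 := by rw [h2]; rfl
  rw [natCast_coeff_zero] at h3
  exact hm (Nat.cast_injective.eq_iff.mp (h3.trans (Nat.cast_zero (R := k)).symm) : m = 0)

lemma uDeriv_pow (f : LS2 k) (n : ℕ) :
    uDeriv (f ^ (n + 1)) = ((n + 1 : ℕ) : LS2 k) * (f ^ n * uDeriv f) := by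
  induction n with
  | zero => rw [pow_one, pow_zero]; push_cast; ring
  | succ n ih =>
    rw [pow_succ, uDeriv_mul, ih]
    push_cast
    ring

lemma uDeriv_inv (f : LS2 k) (hf : f ≠ 0) :
    uDeriv f⁻¹ = -(f⁻¹ * f⁻¹ * uDeriv f) := by
  have h : uDeriv f * f⁻¹ + f * uDeriv f⁻¹ = 0 := by
    have h1 : f * f⁻¹ = 1 := mul_inv_cancel₀ (G₀ := LS2 k) hf
    rw [← uDeriv_mul, h1, uDeriv_one]
  have h2 : f * uDeriv f⁻¹ = -(uDeriv f * f⁻¹) := eq_neg_of_add_eq_zero_right h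
  have h3 : uDeriv f⁻¹ = f⁻¹ * (f * uDeriv f⁻¹) := by
    have h1 : f⁻¹ * f = 1 := inv_mul_cancel₀ (G₀ := LS2 k) hf
    rw [← mul_assoc f⁻¹ f (uDeriv f⁻¹), h1, one_mul (uDeriv f⁻¹)]
  rw [h3, h2]
  ring

lemma uDeriv_zero : uDeriv (0 : LS2 k) = 0 := by
  ext j
  rw [uDeriv_coeff, HahnSeries.coeff_zero, lsDeriv_zero, HahnSeries.coeff_zero]

lemma lsDeriv_neg {R : Type} [AddCommGroup R] (f : LaurentSeries R) :
    lsDeriv (-f) = -lsDeriv f := by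
  ext n
  rw [lsDeriv_coeff, HahnSeries.coeff_neg, HahnSeries.coeff_neg, lsDeriv_coeff, smul_neg]

lemma uDeriv_neg (f : LS2 k) : uDeriv (-f) = -uDeriv f := by
  ext j
  rw [uDeriv_coeff, HahnSeries.coeff_neg, HahnSeries.coeff_neg, uDeriv_coeff, lsDeriv_neg]

lemma uDeriv_natCast [CharZero k] (m : ℕ) : uDeriv ((m : ℕ) : LS2 k) = 0 := by
  induction m with
  | zero => exact_mod_cast uDeriv_zero
  | succ m ih =>
    have : ((m + 1 : ℕ) : LS2 k) = ((m : ℕ) : LS2 k) + 1 := by push_cast; ring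
    rw [this, uDeriv_add, ih, uDeriv_one, add_zero]

lemma uDeriv_neg_one_pow (N : ℕ) : uDeriv ((-1 : LS2 k) ^ N) = 0 := by
  induction N with
  | zero => rw [pow_zero]; exact uDeriv_one
  | succ N ih =>
    rw [pow_succ, uDeriv_mul, ih, show uDeriv (-1 : LS2 k) = 0 from by
      rw [show (-1 : LS2 k) = -(1 : LS2 k) from rfl, uDeriv_neg, uDeriv_one]; exact neg_zero (G := LS2 k)]
    ring

lemma uDeriv_coeff_neg_one (f : LS2 k) (b : ℤ) :
    ((uDeriv f).coeff b).coeff (-1) = 0 := by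
  rw [uDeriv_coeff, lsDeriv_coeff]
  norm_num

/-- resU of f^i * f' vanishes when i ≠ -1. -/
lemma resU_zpow_mul [CharZero k] (f : LS2 k) (hf : f ≠ 0) (i : ℤ) (hi : i ≠ -1) :
    resU (f ^ i * uDeriv f) = 0 := by
  ext b
  rw [resU_coeff, HahnSeries.coeff_zero]
  rcases le_or_gt 0 i with hpos | hneg
  · set m := i.toNat with hm
    rw [show i = ((m : ℕ) : ℤ) from (Int.toNat_of_nonneg hpos).symm, zpow_natCast]
    have hz : ((uDeriv (f ^ (m + 1))).coeff b).coeff (-1) = 0 := uDeriv_coeff_neg_one _ b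
    rw [uDeriv_pow, natCast_mul_coeff, natCast_mul_coeff] at hz
    rcases mul_eq_zero.mp hz with h | h
    · exact absurd h (Nat.cast_ne_zero.mpr (Nat.succ_ne_zero m))
    · exact h
  · obtain ⟨q, hq⟩ : ∃ q : ℕ, (-i).toNat = q + 2 := by
      refine ⟨(-i).toNat - 2, ?_⟩
      omega
    have hiq : i = -(((q + 2 : ℕ) : ℤ)) := by push_cast; omega
    have e1 : f ^ i = (f ^ (((q + 2 : ℕ)) : ℤ))⁻¹ := by
      rw [hiq]; exact zpow_neg f _
    have e2 : f ^ (((q + 2 : ℕ)) : ℤ) = f ^ (q + 2 : ℕ) := by rw [zpow_natCast]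
    have e3 : (f ^ (q + 2 : ℕ))⁻¹ = (f⁻¹) ^ (q + 2) := (inv_pow f (q + 2)).symm
    rw [e1, e2, e3]
    have hz : ((uDeriv ((f⁻¹) ^ (q + 1))).coeff b).coeff (-1) = 0 := uDeriv_coeff_neg_one _ b
    have hEq : uDeriv ((f⁻¹) ^ (q + 1)) =
        -(((q + 1 : ℕ) : LS2 k) * ((f⁻¹) ^ (q + 2) * uDeriv f)) := by
      rw [uDeriv_pow, uDeriv_inv f hf]
      ring
    rw [hEq, HahnSeries.coeff_neg, HahnSeries.coeff_neg, natCast_mul_coeff, natCast_mul_coeff,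
      neg_eq_zero] at hz
    rcases mul_eq_zero.mp hz with h | h
    · exact absurd h (Nat.cast_ne_zero.mpr (Nat.succ_ne_zero q))
    · exact h


lemma resU_add (f g : LS2 k) : resU (f + g) = resU f + resU g := by
  ext b
  rw [HahnSeries.coeff_add, resU_coeff, resU_coeff, resU_coeff, HahnSeries.coeff_add,
    HahnSeries.coeff_add]

lemma neg_one_pow_mul_coeff (N : ℕ) (Z : LS2 k) (b : ℤ) (h : Z.coeff b = 0) :
    ((-1 : LS2 k) ^ N * Z).coeff b = 0 := by
  induction N generalizing Z with
  | zero =>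
    rw [pow_zero]
    have h1 : (1 : LS2 k) * Z = Z := one_mul Z
    rw [h1, h]
  | succ N ih =>
    rw [pow_succ, mul_assoc ((-1 : LS2 k) ^ N) (-1 : LS2 k) Z]
    apply ih
    have h1 : (-1 : LS2 k) * Z = -Z := by ring
    rw [h1, HahnSeries.coeff_neg, h, neg_zero]

/-- Partial sums of the logarithm series for 1 + W. -/
def geomS (W : LS2 k) (N : ℕ) : LS2 k :=
  ∑ n ∈ Finset.range N, ((-1 : LS2 k) ^ n * (((n + 1 : ℕ)) : LS2 k)⁻¹) * W ^ (n + 1)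

lemma tel [CharZero k] (W : LS2 k) (N : ℕ) :
    (1 + W) * uDeriv (geomS W N) = uDeriv W - (-1 : LS2 k) ^ N * (W ^ N * uDeriv W) := by
  induction N with
  | zero =>
    simp only [geomS]
    rw [Finset.range_zero, Finset.sum_empty, uDeriv_zero, pow_zero, pow_zero]
    ring
  | succ N ih =>
    have hS : geomS W (N + 1) = geomS W N +
        ((-1 : LS2 k) ^ N * (((N + 1 : ℕ)) : LS2 k)⁻¹) * W ^ (N + 1) := by
      simp only [geomS]
      rw [Finset.sum_range_succ]
    have hcne : (((N + 1 : ℕ)) : LS2 k) ≠ 0 := natCast_ne_zero_ls2 _ (Nat.succ_ne_zero N)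
    have hDc : uDeriv ((-1 : LS2 k) ^ N * (((N + 1 : ℕ)) : LS2 k)⁻¹) = 0 := by
      rw [uDeriv_mul, uDeriv_neg_one_pow, uDeriv_inv _ hcne, uDeriv_natCast]
      ring
    have hc : (((N + 1 : ℕ)) : LS2 k)⁻¹ * (((N + 1 : ℕ)) : LS2 k) = 1 :=
      inv_mul_cancel₀ (G₀ := LS2 k) hcne
    have step : uDeriv (geomS W (N + 1)) = uDeriv (geomS W N) +
        (-1 : LS2 k) ^ N * (W ^ N * uDeriv W) := by
      rw [hS, uDeriv_add, uDeriv_mul, hDc, uDeriv_pow]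
      linear_combination ((-1 : LS2 k) ^ N * (W ^ N * uDeriv W)) * hc
    rw [step]
    linear_combination ih

lemma geom_resU [CharZero k] (W : LS2 k) (hW : ∀ j ≤ 0, W.coeff j = 0) :
    resU ((1 + W)⁻¹ * uDeriv W) = 0 := by
  have h1 : ∀ j < (0:ℤ), ((1:LS2 k) + W).coeff j = 0 := fun j hj => by
    rw [HahnSeries.coeff_add, HahnSeries.coeff_one, if_neg (by omega), hW j (le_of_lt hj), add_zero]
  have h0 : ((1:LS2 k) + W).coeff 0 = 1 := by
    rw [HahnSeries.coeff_add, HahnSeries.coeff_one, if_pos rfl, hW 0 le_rfl, add_zero]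
  have h0ne : ((1:LS2 k) + W).coeff 0 ≠ 0 := by rw [h0]; exact one_ne_zero
  have hBinv := inv_coeff_field ((1:LS2 k) + W) 0 h1 h0ne
  have hB : ∀ j < (0:ℤ), (((1:LS2 k) + W)⁻¹).coeff j = 0 := fun j hj => hBinv.1 j (by omega)
  have h1Wne : (1:LS2 k) + W ≠ 0 := fun h => h0ne (by rw [h]; exact HahnSeries.coeff_zero)
  ext b
  rw [resU_coeff, HahnSeries.coeff_zero]
  set N := b.toNat with hN
  have hmulB : ((1:LS2 k)+W)⁻¹ * ((1+W) * uDeriv (geomS W N)) = uDeriv (geomS W N) := by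
    rw [← mul_assoc (((1:LS2 k)+W)⁻¹) ((1:LS2 k)+W) (uDeriv (geomS W N))]
    have e1 : ((1:LS2 k)+W)⁻¹ * ((1:LS2 k)+W) = 1 := inv_mul_cancel₀ (G₀ := LS2 k) h1Wne
    rw [e1, one_mul (uDeriv (geomS W N))]
  have t2 : uDeriv (geomS W N) =
      ((1:LS2 k)+W)⁻¹ * (uDeriv W - (-1:LS2 k)^N * (W^N * uDeriv W)) := by
    rw [← hmulB, tel W N]
  have key : ((1:LS2 k)+W)⁻¹ * uDeriv W = uDeriv (geomS W N) +
      (-1:LS2 k)^N * (((1:LS2 k)+W)⁻¹ * (W^N * uDeriv W)) := by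
    rw [t2]
    ring
  rw [key, HahnSeries.coeff_add, HahnSeries.coeff_add, uDeriv_coeff_neg_one]
  have hZ : ((((1:LS2 k)+W)⁻¹) * (W ^ N * uDeriv W)).coeff b = 0 := by
    have hWD : ∀ j < ((N:ℤ) + 1), (W ^ N * uDeriv W).coeff j = 0 := fun j hj =>
      mul_coeff_zero_of_lt _ _ (pow_coeff_zero_of_lt W (fun i hi => hW i (by omega)) N)
        (fun i hi => by rw [uDeriv_coeff, hW i (by omega), lsDeriv_zero])
        hj
    exact mul_coeff_zero_of_lt _ _ hB hWD (by omega)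
  rw [neg_one_pow_mul_coeff N _ b hZ, HahnSeries.coeff_zero]
  try norm_num

lemma resU_dlog [CharZero k] (u' : LS2 k)
    (hI : ∀ j i : ℤ, (j < 0 ∨ i < 0) → (u'.coeff j).coeff i = 0)
    (hval : (u'.coeff 0).order = 1) (hne : u'.coeff 0 ≠ 0) :
    resU (u'⁻¹ * uDeriv u') = 1 := by
  set v := u'.coeff 0 with hv
  have hvne : v ≠ 0 := hne
  have hv1 : v.coeff 1 ≠ 0 := by
    have h := (HahnSeries.coeff_order_eq_zero (x := v)).not.mpr hvne
    rwa [hval] at h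
  have hv0 : ∀ j < (1:ℤ), v.coeff j = 0 := fun j hj =>
    HahnSeries.coeff_eq_zero_of_lt_order (by rw [hval]; exact hj)
  set V : LS2 k := HahnSeries.single 0 v with hV
  have hVne : V ≠ 0 := HahnSeries.single_ne_zero hvne
  have hVinv : V⁻¹ = HahnSeries.single 0 v⁻¹ := by
    have hmul : HahnSeries.single (0:ℤ) v⁻¹ * V = 1 := by
      rw [hV, HahnSeries.single_mul_single]
      have e : v⁻¹ * v = 1 := inv_mul_cancel₀ hvne
      rw [e, show (0:ℤ) + 0 = 0 from rfl]
      exact HahnSeries.single_zero_one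
    exact (@eq_inv_of_mul_eq_one_left (LS2 k) _ _ _ hmul).symm
  have hDV : uDeriv V = HahnSeries.single 0 (lsDeriv v) := by
    ext j
    rw [uDeriv_coeff]
    by_cases hj : j = 0
    · rw [hj, hV, HahnSeries.coeff_single_same, HahnSeries.coeff_single_same]
    · rw [hV, HahnSeries.coeff_single_of_ne hj, HahnSeries.coeff_single_of_ne hj, lsDeriv_zero]
  set W : LS2 k := V⁻¹ * (u' - V) with hW
  have hWc : ∀ j ≤ 0, W.coeff j = 0 := by
    intro j hj
    rw [hW, hVinv, HahnSeries.coeff_single_zero_mul, HahnSeries.coeff_sub]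
    rcases lt_or_eq_of_le hj with hlt | heq
    · have hu0 : u'.coeff j = 0 := by
        ext i
        rw [HahnSeries.coeff_zero]
        exact hI j i (Or.inl hlt)
      rw [hu0, hV, HahnSeries.coeff_single_of_ne (show j ≠ 0 from ne_of_lt hlt)]
      rw [sub_zero, mul_zero]
    · rw [heq, hV, HahnSeries.coeff_single_same, ← hv, sub_self, mul_zero]
  have hu'eq : u' = V * (1 + W) := by
    rw [hW]
    have e : V * ((1:LS2 k) + V⁻¹ * (u' - V)) = V + (V * V⁻¹) * (u' - V) := by ring
    have e2 : V * V⁻¹ = 1 := mul_inv_cancel₀ (G₀ := LS2 k) hVne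
    rw [e, e2, one_mul (u' - V)]
    ring
  have h1Wne : (1:LS2 k) + W ≠ 0 := by
    intro h
    have h2 : ((1:LS2 k) + W).coeff 0 = 0 := by rw [h]; exact HahnSeries.coeff_zero
    rw [HahnSeries.coeff_add, hWc 0 le_rfl, add_zero, HahnSeries.coeff_one, if_pos rfl] at h2
    exact one_ne_zero h2
  have hsplit : u'⁻¹ * uDeriv u' = V⁻¹ * uDeriv V + ((1:LS2 k) + W)⁻¹ * uDeriv W := by
    have hD : uDeriv u' = uDeriv V * (1 + W) + V * uDeriv W := by
      rw [hu'eq, uDeriv_mul, uDeriv_add, uDeriv_one, zero_add (uDeriv W)]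
    have hinv : u'⁻¹ = ((1:LS2 k) + W)⁻¹ * V⁻¹ := by
      rw [hu'eq]
      exact mul_inv_rev V (1 + W)
    rw [hinv, hD]
    have e1 : ((1:LS2 k)+W)⁻¹ * ((1:LS2 k)+W) = 1 := inv_mul_cancel₀ (G₀ := LS2 k) h1Wne
    have e2 : V⁻¹ * V = 1 := inv_mul_cancel₀ (G₀ := LS2 k) hVne
    linear_combination (V⁻¹ * uDeriv V) * e1 + (((1:LS2 k)+W)⁻¹ * uDeriv W) * e2
  rw [hsplit, resU_add]
  have hres2 : resU (((1:LS2 k) + W)⁻¹ * uDeriv W) = 0 := geom_resU W hWc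
  have hres1 : resU (V⁻¹ * uDeriv V) = 1 := by
    rw [hVinv, hDV, HahnSeries.single_mul_single, show (0:ℤ) + 0 = 0 from rfl]
    ext b
    rw [resU_coeff]
    by_cases hb : b = 0
    · rw [hb, HahnSeries.coeff_single_same, HahnSeries.coeff_one, if_pos rfl]
      rw [coeff_mul_fin]
      rw [finsum_eq_single _ (-1 : ℤ) ?hothers]
      case hothers =>
        intro a ha
        by_cases h1 : a < -1
        · rw [(inv_coeff_field v 1 hv0 hv1).1 a (by omega), zero_mul]
        · rw [lsDeriv_coeff, hv0 ((-1) - a + 1) (by omega), smul_zero, mul_zero]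
      rw [show (-1:ℤ) - (-1) = 0 from by norm_num, lsDeriv_coeff,
        (inv_coeff_field v 1 hv0 hv1).2, show (0:ℤ) + 1 = 1 from rfl, one_smul]
      exact inv_mul_cancel₀ hv1
    · rw [HahnSeries.coeff_single_of_ne hb, HahnSeries.coeff_one, if_neg hb,
        HahnSeries.coeff_zero]
  rw [hres1, hres2, add_zero]

end Lemmas

/-- independence of res_u from the choice of the local parameter u.
Let u' ∈ I = k[[u,t]] be another local parameter (its image in k((u)) = K̄ has
valuation 1).  If ω = g·du∧dt ∈ Ω̃²_{K/k} also admits a (t-adically and u-adically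
convergent, coefficientwise) expansion ω = Σ_i (u')^i du' ∧ (c_i dt), then the residue
computed in the parameter u', namely c₋₁, coincides with res_u(ω) = res_u(g). -/
theorem res_u_independent_of_parameter (k : Type) [Field k] [CharZero k]
    (u' : LS2 k)
    (hI : ∀ j i : ℤ, (j < 0 ∨ i < 0) → (u'.coeff j).coeff i = 0)
    (hval : (u'.coeff 0).order = 1) (hne : u'.coeff 0 ≠ 0)
    (g : LS2 k) (c : ℤ → LS k)
    (hbd : ∃ N : ℤ, ∀ i < N, c i = 0)
    (hfin : ∀ a b : ℤ,
      {i : ℤ | (((u' ^ i * uDeriv u' * ofT (c i)).coeff b).coeff a) ≠ 0}.Finite)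
    (hsum : ∀ a b : ℤ,
      (g.coeff b).coeff a = ∑ᶠ i : ℤ, (((u' ^ i * uDeriv u' * ofT (c i)).coeff b).coeff a)) :
    c (-1) = resU g := by
  have hu'ne : u' ≠ 0 := fun h => hne (by rw [h]; exact HahnSeries.coeff_zero)
  ext b
  rw [show (resU g).coeff b = ∑ᶠ i : ℤ, (((u' ^ i * uDeriv u' * ofT (c i)).coeff b).coeff (-1))
    from hsum (-1) b]
  rw [finsum_eq_single _ (-1 : ℤ) ?hzero]
  case hzero =>
    intro i hi
    have h1 : resU (u' ^ i * uDeriv u' * ofT (c i)) = resU (u' ^ i * uDeriv u') * c i :=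
      resU_mul_ofT _ _
    have h2 : resU (u' ^ i * uDeriv u') = 0 := resU_zpow_mul u' hu'ne i hi
    have h4 : resU (u' ^ i * uDeriv u') * c i = 0 := by rw [h2]; exact zero_mul (c i)
    calc ((u' ^ i * uDeriv u' * ofT (c i)).coeff b).coeff (-1)
        = (resU (u' ^ i * uDeriv u' * ofT (c i))).coeff b := rfl
      _ = (resU (u' ^ i * uDeriv u') * c i).coeff b := by rw [h1]
      _ = (0 : LS k).coeff b := by rw [h4]
      _ = 0 := HahnSeries.coeff_zero
  have h1 : resU (u' ^ (-1:ℤ) * uDeriv u' * ofT (c (-1))) =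
      resU (u' ^ (-1:ℤ) * uDeriv u') * c (-1) := resU_mul_ofT _ _
  have h2 : u' ^ (-1:ℤ) = u'⁻¹ := zpow_neg_one u'
  have h3 : resU (u' ^ (-1:ℤ) * uDeriv u') = 1 := by
    rw [h2]; exact resU_dlog u' hI hval hne
  have h4 : resU (u' ^ (-1:ℤ) * uDeriv u') * c (-1) = c (-1) := by
    rw [h3]; exact one_mul (c (-1))
  calc (c (-1)).coeff b
      = (resU (u' ^ (-1:ℤ) * uDeriv u') * c (-1)).coeff b := by rw [h4]
    _ = (resU (u' ^ (-1:ℤ) * uDeriv u' * ofT (c (-1)))).coeff b := by rw [h1]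
    _ = ((u' ^ (-1:ℤ) * uDeriv u' * ofT (c (-1))).coeff b).coeff (-1) := rfl

end
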